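/- arXiv:2408.09200 — 2 statements merged into one kernel-verified Lean document; each statement's English description precedes it below -/
import Mathlib

section
/- Let (J, ·) be a Jordan superalgebra and α, β two commuting even superalgebra endomorphisms of J. Define x ·_{α,β} y = α(x) · β(y). Then (J, ·_{α,β}, α, β) is a BiHom-Jordan superalgebra. -/
noncomputable section

/-- The super sign `(-1)^{pq}` for parities `p q : ZMod 2`. -/
def sgn (𝕜 : Type*) [Field 𝕜] (p q : ZMod 2) : 𝕜 := (-1 : 𝕜) ^ (p * q).val

section SuperDefs

variable {𝕜 J V W : Type*} [Field 𝕜]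
  [AddCommGroup J] [Module 𝕜 J]
  [AddCommGroup V] [Module 𝕜 V]
  [AddCommGroup W] [Module 𝕜 W]

/-- An even linear endomorphism with respect to a `ZMod 2`-grading. -/
def IsEvenMap (Jg : ZMod 2 → Submodule 𝕜 J) (f : J →ₗ[𝕜] J) : Prop :=
  ∀ p x, x ∈ Jg p → f x ∈ Jg p

/-- An even bilinear multiplication with respect to a `ZMod 2`-grading. -/
def IsEvenMul (Jg : ZMod 2 → Submodule 𝕜 J) (mul : J →ₗ[𝕜] J →ₗ[𝕜] J) : Prop :=
  ∀ p q x y, x ∈ Jg p → y ∈ Jg q → mul x y ∈ Jg (p + q)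

/-- `φ` is an algebra morphism for `mul`. -/
def IsMultiplicative (mul : J →ₗ[𝕜] J →ₗ[𝕜] J) (φ : J →ₗ[𝕜] J) : Prop :=
  ∀ x y, φ (mul x y) = mul (φ x) (φ y)

/-- The associator. -/
def jas (mul : J →ₗ[𝕜] J →ₗ[𝕜] J) (x y z : J) : J :=
  mul (mul x y) z - mul x (mul y z)

/-- A Jordan superalgebra structure on a `ZMod 2`-graded vector space. -/
def IsJordanSuper (Jg : ZMod 2 → Submodule 𝕜 J) (mul : J →ₗ[𝕜] J →ₗ[𝕜] J) : Prop :=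
  IsEvenMul Jg mul ∧
  (∀ p q x y, x ∈ Jg p → y ∈ Jg q → mul x y = sgn 𝕜 p q • mul y x) ∧
  (∀ px py pz pt (x y z t : J), x ∈ Jg px → y ∈ Jg py → z ∈ Jg pz → t ∈ Jg pt →
    sgn 𝕜 pt (px + pz) • jas mul (mul x y) z t +
    sgn 𝕜 px (py + pz) • jas mul (mul y t) z x +
    sgn 𝕜 py (pt + pz) • jas mul (mul t x) z y = 0)

/-- The BiHom-associator `ass_{α,β}`. -/
def bass (mul : J →ₗ[𝕜] J →ₗ[𝕜] J) (α β : J →ₗ[𝕜] J) (x y z : J) : J :=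
  mul (mul x y) (β z) - mul (α x) (mul y z)

/-- A BiHom-Jordan superalgebra structure. -/
def IsBiHomJordanSuper (Jg : ZMod 2 → Submodule 𝕜 J)
    (mul : J →ₗ[𝕜] J →ₗ[𝕜] J) (α β : J →ₗ[𝕜] J) : Prop :=
  IsEvenMul Jg mul ∧ IsEvenMap Jg α ∧ IsEvenMap Jg β ∧
  (∀ x, α (β x) = β (α x)) ∧
  (∀ p q x y, x ∈ Jg p → y ∈ Jg q → mul (β x) (α y) = sgn 𝕜 p q • mul (β y) (α x)) ∧
  (∀ px py pz pt (x y z t : J), x ∈ Jg px → y ∈ Jg py → z ∈ Jg pz → t ∈ Jg pt →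
    sgn 𝕜 pt (px + pz) •
      bass mul α β (mul (β (β x)) (α (β y))) (α (α (β z))) (α (α (α t))) +
    sgn 𝕜 px (py + pz) •
      bass mul α β (mul (β (β y)) (α (β t))) (α (α (β z))) (α (α (α x))) +
    sgn 𝕜 py (pt + pz) •
      bass mul α β (mul (β (β t)) (α (β x))) (α (α (β z))) (α (α (α y))) = 0)

/-- A representation of a BiHom-Jordan superalgebra `(J, mul, α, β)` on `(V, ρ, αV, βV)`. -/
def IsRep (Jg : ZMod 2 → Submodule 𝕜 J) (mul : J →ₗ[𝕜] J →ₗ[𝕜] J) (α β : J →ₗ[𝕜] J)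
    (Vg : ZMod 2 → Submodule 𝕜 V) (ρ : J →ₗ[𝕜] V →ₗ[𝕜] V) (αV βV : V ≃ₗ[𝕜] V) : Prop :=
  (∀ p q x v, x ∈ Jg p → v ∈ Vg q → ρ x v ∈ Vg (p + q)) ∧
  (∀ p v, v ∈ Vg p → αV v ∈ Vg p) ∧
  (∀ p v, v ∈ Vg p → βV v ∈ Vg p) ∧
  (∀ v, αV (βV v) = βV (αV v)) ∧
  (∀ x v, αV (ρ x v) = ρ (α x) (αV v)) ∧
  (∀ x v, βV (ρ x v) = ρ (β x) (βV v)) ∧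
  (∀ px py pz (x y z : J), x ∈ Jg px → y ∈ Jg py → z ∈ Jg pz → ∀ v : V,
    sgn 𝕜 px pz • ρ (mul (α (β (β x))) (α (α (β y)))) (ρ (α (α (β z))) (αV (αV (αV v)))) +
    sgn 𝕜 py px • ρ (mul (α (β (β y))) (α (α (β z)))) (ρ (α (α (β x))) (αV (αV (αV v)))) +
    sgn 𝕜 pz py • ρ (mul (α (β (β z))) (α (α (β x)))) (ρ (α (α (β y))) (αV (αV (αV v)))) =
    sgn 𝕜 px pz • ρ (mul (mul (β (β x)) (α (β y))) (α (α (β z)))) (βV (αV (αV (αV v)))) +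
    sgn 𝕜 px (py + pz) •
      ρ (α (α (β (β x)))) (ρ (α (α (β z))) (ρ (α (α y)) (βV.symm (αV (αV (αV v)))))) +
    sgn 𝕜 px py •
      ρ (α (α (β (β y)))) (ρ (α (α (β z))) (ρ (α (α x)) (βV.symm (αV (αV (αV v))))))) ∧
  (∀ px py pz (x y z : J), x ∈ Jg px → y ∈ Jg py → z ∈ Jg pz → ∀ v : V,
    sgn 𝕜 px pz • ρ (α (α (β (β x)))) (ρ (mul (α (β y)) (α (α z))) (αV (αV (αV v)))) +
    sgn 𝕜 py px • ρ (α (α (β (β y)))) (ρ (mul (α (β z)) (α (α x))) (αV (αV (αV v)))) +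
    sgn 𝕜 pz py • ρ (α (α (β (β z)))) (ρ (mul (α (β x)) (α (α y))) (αV (αV (αV v)))) =
    sgn 𝕜 px pz • ρ (mul (α (β (β x))) (α (α (β y)))) (ρ (α (α (β z))) (αV (αV (αV v)))) +
    sgn 𝕜 py px • ρ (mul (α (β (β y))) (α (α (β z)))) (ρ (α (α (β x))) (αV (αV (αV v)))) +
    sgn 𝕜 pz py • ρ (mul (α (β (β z))) (α (α (β x)))) (ρ (α (α (β y))) (αV (αV (αV v)))))

/-- An `𝒪`-operator of parity `pT` of a BiHom-Jordan superalgebra associated to a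
representation `(V, ρ, αV, βV)`. -/
def IsOOperator (Jg : ZMod 2 → Submodule 𝕜 J) (mul : J →ₗ[𝕜] J →ₗ[𝕜] J) (α β : J →ₗ[𝕜] J)
    (Vg : ZMod 2 → Submodule 𝕜 V) (ρ : J →ₗ[𝕜] V →ₗ[𝕜] V) (αV βV : V ≃ₗ[𝕜] V)
    (pT : ZMod 2) (T : V →ₗ[𝕜] J) : Prop :=
  (∀ q v, v ∈ Vg q → T v ∈ Jg (q + pT)) ∧
  (∀ v, α (T v) = T (αV v)) ∧
  (∀ v, β (T v) = T (βV v)) ∧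
  (∀ pu pv (u v : V), u ∈ Vg pu → v ∈ Vg pv →
    mul (T u) (T v) =
      T (sgn 𝕜 pT (pT + pu) • ρ (T u) v +
         sgn 𝕜 pu (pv + pT) • ρ (T (αV.symm (βV v))) (αV (βV.symm u))))

/-- A BiHom-pre-Jordan superalgebra structure, with `star` the associated
super-symmetrized product. -/
def IsBiHomPreJordanSuper (Jg : ZMod 2 → Submodule 𝕜 J)
    (circ star : J →ₗ[𝕜] J →ₗ[𝕜] J) (α β : J ≃ₗ[𝕜] J) : Prop :=
  IsEvenMul Jg circ ∧ IsEvenMap Jg α.toLinearMap ∧ IsEvenMap Jg β.toLinearMap ∧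
  (∀ x, α (β x) = β (α x)) ∧
  (∀ x y, α (circ x y) = circ (α x) (α y)) ∧
  (∀ x y, β (circ x y) = circ (β x) (β y)) ∧
  (∀ p q x y, x ∈ Jg p → y ∈ Jg q →
    star x y = circ x y + sgn 𝕜 p q • circ (α.symm (β y)) (α (β.symm x))) ∧
  (∀ px py pz pt (x y z t : J), x ∈ Jg px → y ∈ Jg py → z ∈ Jg pz → t ∈ Jg pt →
    sgn 𝕜 px pz • circ (star (α (β (β x))) (α (α (β y)))) (circ (α (α (β z))) (α (α (α t)))) +
    sgn 𝕜 py px • circ (star (α (β (β y))) (α (α (β z)))) (circ (α (α (β x))) (α (α (α t)))) +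
    sgn 𝕜 pz py • circ (star (α (β (β z))) (α (α (β x)))) (circ (α (α (β y))) (α (α (α t)))) =
    sgn 𝕜 px pz • circ (star (star (β (β x)) (α (β y))) (α (α (β z)))) (α (α (α (β t)))) +
    sgn 𝕜 px (py + pz) •
      circ (α (α (β (β x)))) (circ (α (α (β z))) (circ (α (α y)) (α (α (α (β.symm t)))))) +
    sgn 𝕜 px py •
      circ (α (α (β (β y)))) (circ (α (α (β z))) (circ (α (α x)) (α (α (α (β.symm t))))))) ∧
  (∀ px py pz pt (x y z t : J), x ∈ Jg px → y ∈ Jg py → z ∈ Jg pz → t ∈ Jg pt →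
    sgn 𝕜 px pz • circ (α (α (β (β x)))) (circ (star (α (β y)) (α (α z))) (α (α (α t)))) +
    sgn 𝕜 py px • circ (α (α (β (β y)))) (circ (star (α (β z)) (α (α x))) (α (α (α t)))) +
    sgn 𝕜 pz py • circ (α (α (β (β z)))) (circ (star (α (β x)) (α (α y))) (α (α (α t)))) =
    sgn 𝕜 px pz • circ (star (α (β (β x))) (α (α (β y)))) (circ (α (α (β z))) (α (α (α t)))) +
    sgn 𝕜 py px • circ (star (α (β (β y))) (α (α (β z)))) (circ (α (α (β x))) (α (α (α t)))) +
    sgn 𝕜 pz py • circ (star (α (β (β z))) (α (α (β x)))) (circ (α (α (β y))) (α (α (α t)))))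

/-- A BiHom-super-bimodule `(V, l, r, αV, βV)` of a BiHom-Jordan superalgebra. -/
def IsBiHomSuperBimodule (Jg : ZMod 2 → Submodule 𝕜 J)
    (mul : J →ₗ[𝕜] J →ₗ[𝕜] J) (α β : J →ₗ[𝕜] J)
    (Vg : ZMod 2 → Submodule 𝕜 V) (l r : J →ₗ[𝕜] V →ₗ[𝕜] V) (αV βV : V →ₗ[𝕜] V) : Prop :=
  (∀ p q x v, x ∈ Jg p → v ∈ Vg q → l x v ∈ Vg (p + q)) ∧
  (∀ p q x v, x ∈ Jg p → v ∈ Vg q → r x v ∈ Vg (p + q)) ∧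
  (∀ p v, v ∈ Vg p → αV v ∈ Vg p) ∧
  (∀ p v, v ∈ Vg p → βV v ∈ Vg p) ∧
  (∀ v, αV (βV v) = βV (αV v)) ∧
  (∀ x v, l (β x) (αV v) = r (α x) (βV v)) ∧
  (∀ px py pz (x y z : J), x ∈ Jg px → y ∈ Jg py → z ∈ Jg pz → ∀ v : V,
    l (mul (mul (β (β x)) (α (β y))) (α (α (β z)))) (αV (αV (αV (βV v)))) -
    l (mul (α (β (β x))) (α (α (β y)))) (l (α (α (β z))) (αV (αV (αV v)))) =
    sgn 𝕜 pz (px + py) •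
      r (mul (α (α (β z))) (α (α (α x)))) (αV (l (β (β y)) (αV (βV v)))) -
    sgn 𝕜 py pz •
      r (α (α (α (β x)))) (r (α (α (β z))) (l (β (β y)) (αV (βV v)))) +
    sgn 𝕜 pz (px + py) •
      r (mul (α (α (β z))) (α (α (α y)))) (αV (r (α (β x)) (βV (βV v)))) -
    sgn 𝕜 px (py + pz) •
      r (α (α (α (β y)))) (r (α (α (β z))) (r (α (β x)) (βV (βV v))))) ∧
  (∀ px py pz (x y z : J), x ∈ Jg px → y ∈ Jg py → z ∈ Jg pz → ∀ v : V,
    r (α (α (α (β x)))) (l (mul (β (β y)) (α (β z))) (αV (αV (βV v)))) -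
    l (mul (α (β (β y))) (α (α (β z)))) (r (α (α (α x))) (αV (αV (βV v)))) =
    sgn 𝕜 pz (px + py) •
      l (α (mul (β (β z)) (α (β x)))) (r (α (α (α y))) (αV (αV (βV v)))) -
    sgn 𝕜 px (py + pz) •
      r (α (α (α (β y)))) (l (mul (β (β z)) (α (β x))) (αV (αV (βV v)))) +
    l (α (mul (β (β x)) (α (β y)))) (r (α (α (α z))) (αV (αV (βV v)))) -
    sgn 𝕜 pz (px + py) •
      r (α (α (α (β z)))) (l (mul (β (β x)) (α (β y))) (αV (αV (βV v)))))

/-- An isomorphism of two representations of a BiHom-Jordan superalgebra. -/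
def IsRepIso (Jg : ZMod 2 → Submodule 𝕜 J)
    (Vg : ZMod 2 → Submodule 𝕜 V) (ρ₁ : J →ₗ[𝕜] V →ₗ[𝕜] V) (α₁ β₁ : V ≃ₗ[𝕜] V)
    (Wg : ZMod 2 → Submodule 𝕜 W) (ρ₂ : J →ₗ[𝕜] W →ₗ[𝕜] W) (α₂ β₂ : W ≃ₗ[𝕜] W)
    (Φ : V ≃ₗ[𝕜] W) : Prop :=
  (∀ p v, v ∈ Vg p → Φ v ∈ Wg p) ∧
  (∀ v, Φ (α₁ v) = α₂ (Φ v)) ∧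
  (∀ v, Φ (β₁ v) = β₂ (Φ v)) ∧
  (∀ (x : J) (v : V), Φ (ρ₁ x v) = ρ₂ x (Φ v))

/-- The induced grading on the dual space: `ξ` has parity `p` iff `ξ` kills `Vg (p+1)`. -/
def dualGrading (Vg : ZMod 2 → Submodule 𝕜 V) (p : ZMod 2) :
    Submodule 𝕜 (Module.Dual 𝕜 V) where
  carrier := {ξ | ∀ v ∈ Vg (p + 1), ξ v = 0}
  add_mem' := by
    intro a b ha hb v hv
    simp [ha v hv, hb v hv]
  zero_mem' := by intro v hv; simp
  smul_mem' := by
    intro c ξ hξ v hv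
    simp [hξ v hv]

end SuperDefs

/-- Yau twist of a Jordan superalgebra is a BiHom-Jordan superalgebra. -/
theorem stmt0 {𝕜 J : Type*} [Field 𝕜] [CharZero 𝕜] [AddCommGroup J] [Module 𝕜 J]
    (Jg : ZMod 2 → Submodule 𝕜 J) (mul : J →ₗ[𝕜] J →ₗ[𝕜] J)
    (hJ : IsJordanSuper Jg mul)
    (α β : J →ₗ[𝕜] J)
    (hα : IsEvenMap Jg α) (hβ : IsEvenMap Jg β)
    (hcomm : ∀ x, α (β x) = β (α x))
    (hαm : IsMultiplicative mul α) (hβm : IsMultiplicative mul β)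
    (mulAB : J →ₗ[𝕜] J →ₗ[𝕜] J)
    (hAB : ∀ x y, mulAB x y = mul (α x) (β y)) :
    IsBiHomJordanSuper Jg mulAB α β := by
  obtain ⟨heven, hsym, hjordan⟩ := hJ
  refine ⟨?_, hα, hβ, hcomm, ?_, ?_⟩
  · intro p q x y hx hy
    rw [hAB]
    exact heven p q _ _ (hα p x hx) (hβ q y hy)
  · intro p q x y hx hy
    rw [hAB, hAB,
      hsym p q (α (β x)) (β (α y)) (hα p _ (hβ p x hx)) (hβ q _ (hα q y hy))]
    congr 1
    rw [hcomm, hcomm]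
  · intro px py pz pt x y z t hx hy hz ht
    have mem : ∀ p (w : J), w ∈ Jg p → β (β (α (α (α w)))) ∈ Jg p := fun p w hw =>
      hβ p _ (hβ p _ (hα p _ (hα p _ (hα p w hw))))
    have key := hjordan px py pz pt
      (β (β (α (α (α x))))) (β (β (α (α (α y)))))
      (β (β (α (α (α z))))) (β (β (α (α (α t)))))
      (mem px x hx) (mem py y hy) (mem pz z hz) (mem pt t ht)
    have hαm' : ∀ u v, α (mul u v) = mul (α u) (α v) := hαm
    have hβm' : ∀ u v, β (mul u v) = mul (β u) (β v) := hβm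
    simp only [jas, bass, hAB, hαm', hβm', hcomm] at key ⊢
    exact key
end
end

section
/- Let (V, ρ, α_V, β_V) be a representation of a BiHom-Jordan superalgebra (J, ·, α, β) and T an even O-operator of J associated to ρ. Then the product u ∘_V v = ρ(T(u))v defines a BiHom-pre-Jordan superalgebra structure (V, ∘_V, α_V, β_V) on V. -/
noncomputable section

/-- an even `𝒪`-operator induces a BiHom-pre-Jordan superalgebra structure
on `V` via `u ∘ v = ρ(T u) v`. -/
theorem stmt8 {𝕜 J V : Type*} [Field 𝕜] [CharZero 𝕜]
    [AddCommGroup J] [Module 𝕜 J] [AddCommGroup V] [Module 𝕜 V]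
    (Jg : ZMod 2 → Submodule 𝕜 J) (mul : J →ₗ[𝕜] J →ₗ[𝕜] J) (α β : J →ₗ[𝕜] J)
    (hBJ : IsBiHomJordanSuper Jg mul α β)
    (Vg : ZMod 2 → Submodule 𝕜 V) (ρ : J →ₗ[𝕜] V →ₗ[𝕜] V) (αV βV : V ≃ₗ[𝕜] V)
    (hrep : IsRep Jg mul α β Vg ρ αV βV)
    (T : V →ₗ[𝕜] J)
    (hT : IsOOperator Jg mul α β Vg ρ αV βV 0 T)
    (circ : V →ₗ[𝕜] V →ₗ[𝕜] V)
    (hcirc : ∀ u v : V, circ u v = ρ (T u) v)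
    (star : V →ₗ[𝕜] V →ₗ[𝕜] V)
    (hstar : ∀ p q (u v : V), u ∈ Vg p → v ∈ Vg q →
        star u v = circ u v + sgn 𝕜 p q • circ (αV.symm (βV v)) (αV (βV.symm u))) :
    IsBiHomPreJordanSuper Vg circ star αV βV := by
  obtain ⟨hρg, hαg, hβg, hcom, hαρ, hβρ, hax1, hax2⟩ := hrep
  obtain ⟨hTg, hTα, hTβ, hTO⟩ := hT
  -- basic derived facts
  have hTx' : ∀ p (u : V), u ∈ Vg p → T u ∈ Jg p := by
    intro p u hu
    simpa using hTg p u hu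
  have memc : ∀ p q (u v : V), u ∈ Vg p → v ∈ Vg q → circ u v ∈ Vg (p + q) := by
    intro p q u v hu hv
    rw [hcirc]
    exact hρg p q _ _ (hTx' p u hu) hv
  have hsymm2 : ∀ w : V, αV (βV.symm w) = βV.symm (αV w) := by
    intro w
    apply βV.injective
    rw [LinearEquiv.apply_symm_apply, ← hcom, LinearEquiv.apply_symm_apply]
  have L1 : ∀ p q (u v : V), u ∈ Vg p → v ∈ Vg q →
      T (star u v) = mul (T u) (T v) := by
    intro p q u v hu hv
    rw [hstar p q u v hu hv, hTO p q u v hu hv]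
    congr 1
    simp [hcirc, sgn]
  refine ⟨?_, ?_, ?_, hcom, ?_, ?_, hstar, ?_, ?_⟩
  · intro p q u v hu hv
    rw [hcirc]
    exact hρg p q _ _ (hTx' p u hu) hv
  · intro p v hv; exact hαg p v hv
  · intro p v hv; exact hβg p v hv
  · intro u v
    rw [hcirc, hcirc, hαρ, hTα]
  · intro u v
    rw [hcirc, hcirc, hβρ, hTβ]
  · -- first pre-Jordan axiom
    intro px py pz pt x y z t hx hy hz ht
    have hegy : αV.symm (βV (αV (βV y))) = βV (βV y) := by
      rw [← hcom, LinearEquiv.symm_apply_apply]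
    have hegx : αV (βV.symm (βV (βV x))) = αV (βV x) := by
      rw [LinearEquiv.symm_apply_apply]
    have hP : star (βV (βV x)) (αV (βV y)) ∈ Vg (px + py) := by
      rw [hstar px py _ _ (hβg _ _ (hβg _ _ hx)) (hαg _ _ (hβg _ _ hy)), hegy, hegx]
      refine add_mem (memc _ _ _ _ (hβg _ _ (hβg _ _ hx)) (hαg _ _ (hβg _ _ hy)))
        (Submodule.smul_mem _ _ ?_)
      have := memc py px _ _ (hβg _ _ (hβg _ _ hy)) (hαg _ _ (hβg _ _ hx))
      rwa [add_comm] at this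
    simp only [hcirc]
    rw [L1 px py _ _ (hαg _ _ (hβg _ _ (hβg _ _ hx))) (hαg _ _ (hαg _ _ (hβg _ _ hy))),
        L1 py pz _ _ (hαg _ _ (hβg _ _ (hβg _ _ hy))) (hαg _ _ (hαg _ _ (hβg _ _ hz))),
        L1 pz px _ _ (hαg _ _ (hβg _ _ (hβg _ _ hz))) (hαg _ _ (hαg _ _ (hβg _ _ hx))),
        L1 (px + py) pz _ _ hP (hαg _ _ (hαg _ _ (hβg _ _ hz))),
        L1 px py _ _ (hβg _ _ (hβg _ _ hx)) (hαg _ _ (hβg _ _ hy))]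
    simp only [← hTα, ← hTβ]
    simp only [hcom, hsymm2]
    exact hax1 px py pz (T x) (T y) (T z) (hTx' px x hx) (hTx' py y hy) (hTx' pz z hz) t
  · -- second pre-Jordan axiom
    intro px py pz pt x y z t hx hy hz ht
    simp only [hcirc]
    rw [L1 py pz _ _ (hαg _ _ (hβg _ _ hy)) (hαg _ _ (hαg _ _ hz)),
        L1 pz px _ _ (hαg _ _ (hβg _ _ hz)) (hαg _ _ (hαg _ _ hx)),
        L1 px py _ _ (hαg _ _ (hβg _ _ hx)) (hαg _ _ (hαg _ _ hy)),
        L1 px py _ _ (hαg _ _ (hβg _ _ (hβg _ _ hx))) (hαg _ _ (hαg _ _ (hβg _ _ hy))),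
        L1 py pz _ _ (hαg _ _ (hβg _ _ (hβg _ _ hy))) (hαg _ _ (hαg _ _ (hβg _ _ hz))),
        L1 pz px _ _ (hαg _ _ (hβg _ _ (hβg _ _ hz))) (hαg _ _ (hαg _ _ (hβg _ _ hx)))]
    simp only [← hTα, ← hTβ]
    exact hax2 px py pz (T x) (T y) (T z) (hTx' px x hx) (hTx' py y hy) (hTx' pz z hz) t
end
end
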